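/- Let [n] = I ∪ J be a partition into disjoint sets and W ⊆ ℝⁿ a linear subspace. Then ℓ_I^W is minus the adjoint of ℓ_J^{W⊥}: for all x ∈ ℝ^I and y ∈ ℝ^J, ⟨ℓ_I^W(x), y⟩ = −⟨x, ℓ_J^{W⊥}(y)⟩. In particular, ℓ_I^W and ℓ_J^{W⊥} have the same nonzero singular values. -/

import Mathlib

open scoped RealInnerProductSpace

/-- The coordinate projection `π_I : ℝⁿ → ℝ^I` as a linear map. -/
noncomputable def coordRestrict {n : ℕ} (I : Finset (Fin n)) :
    EuclideanSpace ℝ (Fin n) →ₗ[ℝ] EuclideanSpace ℝ {i : Fin n // i ∈ I} where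
  toFun x := WithLp.toLp 2 (fun i : {i : Fin n // i ∈ I} => x i.1)
  map_add' _ _ := rfl
  map_smul' _ _ := rfl

noncomputable def coordExtend {n : ℕ} (I : Finset (Fin n)) :
    EuclideanSpace ℝ {i : Fin n // i ∈ I} →ₗ[ℝ] EuclideanSpace ℝ (Fin n) where
  toFun z := WithLp.toLp 2 (fun i => if h : i ∈ I then z ⟨i, h⟩ else 0)
  map_add' a b := by
    ext i; by_cases h : i ∈ I <;> simp [h, PiLp.add_apply]
  map_smul' c a := by
    ext i; by_cases h : i ∈ I <;> simp [h, PiLp.smul_apply]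

lemma coordRestrict_apply' {n : ℕ} (I : Finset (Fin n)) (a : EuclideanSpace ℝ (Fin n))
    (i : {i : Fin n // i ∈ I}) : coordRestrict I a i = a i.1 := rfl

lemma coordRestrict_extend {n : ℕ} (I : Finset (Fin n)) (z : EuclideanSpace ℝ {i : Fin n // i ∈ I}) :
    coordRestrict I (coordExtend I z) = z := by
  ext i
  simp [coordRestrict_apply', coordExtend, i.2]

lemma coordRestrict_apply {n : ℕ} (I : Finset (Fin n)) (a : EuclideanSpace ℝ (Fin n))
    (i : {i : Fin n // i ∈ I}) : coordRestrict I a i = a i.1 := rfl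

lemma coordExtend_apply_not_mem {n : ℕ} (I : Finset (Fin n))
    (z : EuclideanSpace ℝ {i : Fin n // i ∈ I}) {i : Fin n} (hi : i ∉ I) :
    coordExtend I z i = 0 := by simp [coordExtend, hi]

lemma inner_coordExtend {n : ℕ} (I : Finset (Fin n)) (a : EuclideanSpace ℝ (Fin n))
    (z : EuclideanSpace ℝ {i : Fin n // i ∈ I}) :
    ⟪a, coordExtend I z⟫ = ⟪coordRestrict I a, z⟫ := by
  simp only [PiLp.inner_apply, RCLike.inner_apply, conj_trivial]
  rw [Finset.univ_eq_attach]
  rw [Finset.sum_congr rfl (fun (x : {i : Fin n // i ∈ I}) _ => show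
      z x * (coordRestrict I) a x = coordExtend I z x.1 * a x.1 by
        simp [coordRestrict_apply', coordExtend, x.2])]
  rw [Finset.sum_attach I (fun i => coordExtend I z i * a i)]
  exact (Finset.sum_subset (Finset.subset_univ I) (by
    intro i _ hi
    simp [coordExtend, hi])).symm

lemma inner_eq_zero_of_min {H : Type*} [NormedAddCommGroup H] [InnerProductSpace ℝ H]
    {u d : H} (h : ∀ t : ℝ, ‖u‖ ≤ ‖u + t • d‖) : ⟪u, d⟫ = 0 := by
  by_cases hd : d = 0
  · simp [hd]
  have hq : (0:ℝ) < ‖d‖ ^ 2 := by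
    have := norm_pos_iff.mpr hd
    positivity
  have key : ∀ t : ℝ, 0 ≤ 2 * t * ⟪u, d⟫ + t ^ 2 * ‖d‖ ^ 2 := by
    intro t
    have h1 := h t
    have h2 : ‖u‖ ^ 2 ≤ ‖u + t • d‖ ^ 2 := by
      apply pow_le_pow_left₀ (norm_nonneg _) h1
    rw [norm_add_sq_real, real_inner_smul_right, norm_smul] at h2
    simp only [Real.norm_eq_abs, mul_pow, sq_abs] at h2
    nlinarith
  have k := key (-⟪u, d⟫ / ‖d‖ ^ 2)
  have e : 2 * (-⟪u, d⟫ / ‖d‖ ^ 2) * ⟪u, d⟫ + (-⟪u, d⟫ / ‖d‖ ^ 2) ^ 2 * ‖d‖ ^ 2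
      = -(⟪u, d⟫ ^ 2) / ‖d‖ ^ 2 := by
    field_simp
    ring
  rw [e] at k
  have h3 := mul_nonneg k hq.le
  rw [div_mul_cancel₀ _ (ne_of_gt hq)] at h3
  have h4 : ⟪u, d⟫ ^ 2 = 0 := le_antisymm (by linarith) (sq_nonneg _)
  exact pow_eq_zero_iff (by norm_num) |>.mp h4

lemma inner_split {n : ℕ} (I J : Finset (Fin n)) (hIJ : I ∪ J = Finset.univ)
    (hdisj : Disjoint I J) (a b : EuclideanSpace ℝ (Fin n)) :
    ⟪a, b⟫ = ⟪coordRestrict I a, coordRestrict I b⟫ + ⟪coordRestrict J a, coordRestrict J b⟫ := by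
  have hb : b = coordExtend I (coordRestrict I b) + coordExtend J (coordRestrict J b) := by
    ext i
    by_cases h : i ∈ I
    · have h2 : i ∉ J := fun hj => (Finset.disjoint_left.mp hdisj h) hj
      simp [PiLp.add_apply, coordExtend, coordRestrict_apply', h, h2]
    · have h2 : i ∈ J := by
        have : i ∈ I ∪ J := hIJ ▸ Finset.mem_univ i
        rcases Finset.mem_union.mp this with h' | h'
        · exact absurd h' h
        · exact h'
      simp [PiLp.add_apply, coordExtend, coordRestrict_apply', h, h2]
  conv_lhs => rw [hb]
  rw [inner_add_right, inner_coordExtend, inner_coordExtend]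

/-- `L` is the lifting map `L_I^W : ℝ^I → W`: for every `x`, `L x` is the minimum-norm
element of `{w ∈ W : w_I = Π_{π_I(W)}(x)}` (equivalently, of
`{w ∈ W : w_I - x ∈ (π_I(W))ᗮ}`). -/
def IsLiftingMap {n : ℕ} (I : Finset (Fin n)) (W : Submodule ℝ (EuclideanSpace ℝ (Fin n)))
    (L : EuclideanSpace ℝ {i : Fin n // i ∈ I} →ₗ[ℝ] EuclideanSpace ℝ (Fin n)) : Prop :=
  ∀ x, (L x ∈ W ∧ coordRestrict I (L x) - x ∈ (W.map (coordRestrict I))ᗮ) ∧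
    ∀ w ∈ W, coordRestrict I w - x ∈ (W.map (coordRestrict I))ᗮ → ‖L x‖ ≤ ‖w‖

lemma lifting_orth {n : ℕ} {I : Finset (Fin n)} {W : Submodule ℝ (EuclideanSpace ℝ (Fin n))}
    {L : EuclideanSpace ℝ {i : Fin n // i ∈ I} →ₗ[ℝ] EuclideanSpace ℝ (Fin n)}
    (hL : IsLiftingMap I W L) (x : EuclideanSpace ℝ {i : Fin n // i ∈ I})
    {d : EuclideanSpace ℝ (Fin n)} (hd : d ∈ W) (hdI : coordRestrict I d = 0) :
    ⟪L x, d⟫ = 0 := by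
  obtain ⟨⟨hu, hui⟩, humin⟩ := hL x
  apply inner_eq_zero_of_min
  intro t
  apply humin (L x + t • d) (W.add_mem hu (W.smul_mem t hd))
  rw [map_add, map_smul, hdI]
  simpa using hui

lemma adjoint_identity {n : ℕ} (I J : Finset (Fin n))
    (hIJ : I ∪ J = Finset.univ) (hdisj : Disjoint I J)
    (W : Submodule ℝ (EuclideanSpace ℝ (Fin n)))
    (L : EuclideanSpace ℝ {i : Fin n // i ∈ I} →ₗ[ℝ] EuclideanSpace ℝ (Fin n))
    (L' : EuclideanSpace ℝ {j : Fin n // j ∈ J} →ₗ[ℝ] EuclideanSpace ℝ (Fin n))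
    (hL : IsLiftingMap I W L) (hL' : IsLiftingMap J Wᗮ L') :
    ∀ x y, ⟪(coordRestrict J).comp L x, y⟫ = -⟪x, (coordRestrict I).comp L' y⟫ := by
  intro x y
  obtain ⟨⟨hu, hui⟩, _⟩ := hL x
  obtain ⟨⟨hv, hvj⟩, _⟩ := hL' y
  set u := L x with hu_def
  set v := L' y with hv_def
  set z : EuclideanSpace ℝ {j : Fin n // j ∈ J} := coordRestrict J v - y with hz_def
  set z' : EuclideanSpace ℝ {i : Fin n // i ∈ I} := coordRestrict I u - x with hz'_def
  -- extension of z lies in W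
  have hextz : coordExtend J z ∈ W := by
    rw [← Submodule.orthogonal_orthogonal W]
    rw [Submodule.mem_orthogonal]
    intro p hp
    rw [inner_coordExtend]
    exact (Submodule.mem_orthogonal _ _).mp hvj _ ⟨p, hp, rfl⟩
  have hextzI : coordRestrict I (coordExtend J z) = 0 := by
    ext i
    have : i.1 ∉ J := fun hj => (Finset.disjoint_left.mp hdisj i.2) hj
    exact coordExtend_apply_not_mem J z this
  -- extension of z' lies in Wᗮ
  have hextz' : coordExtend I z' ∈ Wᗮ := by
    rw [Submodule.mem_orthogonal]
    intro p hp
    rw [inner_coordExtend]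
    exact (Submodule.mem_orthogonal _ _).mp hui _ ⟨p, hp, rfl⟩
  have hextz'J : coordRestrict J (coordExtend I z') = 0 := by
    ext j
    have : j.1 ∉ I := fun hi => (Finset.disjoint_left.mp hdisj hi) j.2
    exact coordExtend_apply_not_mem I z' this
  -- orthogonality relations
  have h1 : ⟪u, coordExtend J z⟫ = 0 := lifting_orth hL x hextz hextzI
  have h2 : ⟪v, coordExtend I z'⟫ = 0 := lifting_orth hL' y hextz' hextz'J
  have huv : ⟪u, v⟫ = 0 := (Submodule.mem_orthogonal _ _).mp hv u hu
  -- expand via splitting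
  have e1 : ⟪coordRestrict J u, z⟫ = 0 := by
    have := inner_split I J hIJ hdisj u (coordExtend J z)
    rw [h1, coordRestrict_extend, hextzI] at this
    simpa using this.symm
  have e2 : ⟪coordRestrict I v, z'⟫ = 0 := by
    have := inner_split I J hIJ hdisj v (coordExtend I z')
    rw [h2, coordRestrict_extend, hextz'J] at this
    simpa using this.symm
  have e3 : ⟪coordRestrict I u, coordRestrict I v⟫ + ⟪coordRestrict J u, coordRestrict J v⟫ = 0 := by
    have := inner_split I J hIJ hdisj u v
    rw [huv] at this
    linarith
  rw [hz_def, inner_sub_right] at e1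
  rw [hz'_def, inner_sub_right] at e2
  simp only [LinearMap.coe_comp, Function.comp_apply]
  have comm1 : ⟪coordRestrict I v, coordRestrict I u⟫ = ⟪coordRestrict I u, coordRestrict I v⟫ :=
    real_inner_comm _ _
  have comm2 : ⟪coordRestrict I v, x⟫ = ⟪x, coordRestrict I v⟫ := real_inner_comm _ _
  rw [← hu_def, ← hv_def]
  linarith

/-- The `k`-th largest singular value of a linear map between finite-dimensional
normed spaces, via the Courant–Fischer characterization, with the convention that
it is `0` when `k` exceeds the dimension of the domain. -/
noncomputable def singularValue {E F : Type*} [NormedAddCommGroup E] [NormedAddCommGroup F]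
    [Module ℝ E] [Module ℝ F] (M : E →ₗ[ℝ] F) (k : ℕ) : ℝ :=
  if k ≤ Module.finrank ℝ E then
    sInf {t : ℝ | ∃ S : Submodule ℝ E,
      Module.finrank ℝ S = Module.finrank ℝ E - k + 1 ∧
      t = sSup {r : ℝ | ∃ u ∈ S, u ≠ 0 ∧ r = ‖M u‖ / ‖u‖}}
  else 0

section CF

variable {E F : Type*} [NormedAddCommGroup E] [InnerProductSpace ℝ E]
  [NormedAddCommGroup F] [InnerProductSpace ℝ F]
  [FiniteDimensional ℝ E] [FiniteDimensional ℝ F]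

lemma exists_sorted_eigenbasis (M : E →ₗ[ℝ] F) (d : ℕ) (hd : Module.finrank ℝ E = d) :
    ∃ (f : OrthonormalBasis (Fin d) ℝ E) (ν : Fin d → ℝ),
      Antitone ν ∧ (∀ j, 0 ≤ ν j) ∧
      ∀ j, (LinearMap.adjoint M) (M (f j)) = ν j • f j := by
  have hT : (LinearMap.adjoint M ∘ₗ M).IsSymmetric := by
    intro x y
    simp only [LinearMap.comp_apply]
    rw [LinearMap.adjoint_inner_left, LinearMap.adjoint_inner_right]
  let e := hT.eigenvectorBasis hd
  let μ := hT.eigenvalues hd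
  have happly : ∀ i, (LinearMap.adjoint M) (M (e i)) = μ i • e i := by
    intro i
    have h := hT.apply_eigenvectorBasis hd i
    rw [LinearMap.comp_apply] at h
    exact_mod_cast h
  have hnonneg : ∀ i, 0 ≤ μ i := by
    intro i
    have h1 : ⟪(LinearMap.adjoint M) (M (e i)), e i⟫ = μ i := by
      rw [happly, real_inner_smul_left, real_inner_self_eq_norm_sq,
        e.orthonormal.1 i, one_pow, mul_one]
    have h2 : ⟪(LinearMap.adjoint M) (M (e i)), e i⟫ = ‖M (e i)‖ ^ 2 := by
      rw [LinearMap.adjoint_inner_left, real_inner_self_eq_norm_sq]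
    rw [h2] at h1
    rw [← h1]
    positivity
  let τ := Tuple.sort (fun i => -μ i)
  refine ⟨e.reindex τ.symm, fun j => μ (τ j), ?_, fun j => hnonneg _, ?_⟩
  · intro i j hij
    have := Tuple.monotone_sort (fun i => -μ i) hij
    simp only [Function.comp_apply] at this
    linarith
  · intro j
    simp only [OrthonormalBasis.reindex_apply, Equiv.symm_symm]
    exact happly (τ j)

lemma normM_sq (M : E →ₗ[ℝ] F) {d : ℕ} (f : OrthonormalBasis (Fin d) ℝ E) (ν : Fin d → ℝ)
    (heig : ∀ j, (LinearMap.adjoint M) (M (f j)) = ν j • f j) (u : E) :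
    ‖M u‖ ^ 2 = ∑ j, ν j * ⟪f j, u⟫ ^ 2 := by
  have h := f.sum_inner_mul_inner u ((LinearMap.adjoint M) (M u))
  have h2 : ∀ j, ⟪f j, (LinearMap.adjoint M) (M u)⟫ = ν j * ⟪f j, u⟫ := by
    intro j
    rw [LinearMap.adjoint_inner_right]
    have : ⟪M (f j), M u⟫ = ⟪(LinearMap.adjoint M) (M (f j)), u⟫ := by
      rw [LinearMap.adjoint_inner_left]
    rw [this, heig, real_inner_smul_left]
  have h3 : ⟪u, (LinearMap.adjoint M) (M u)⟫ = ‖M u‖ ^ 2 := by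
    rw [LinearMap.adjoint_inner_right, real_inner_self_eq_norm_sq]
  rw [h3] at h
  rw [← h]
  apply Finset.sum_congr rfl
  intro j _
  rw [h2 j, real_inner_comm u (f j)]
  ring

lemma norm_sq_sum {d : ℕ} (f : OrthonormalBasis (Fin d) ℝ E) (u : E) :
    ‖u‖ ^ 2 = ∑ j, ⟪f j, u⟫ ^ 2 := by
  have h := f.sum_inner_mul_inner u u
  rw [real_inner_self_eq_norm_sq] at h
  rw [← h]
  apply Finset.sum_congr rfl
  intro j _
  rw [real_inner_comm u (f j)]
  ring

lemma coeff_zero_of_mem_span {d : ℕ} (f : OrthonormalBasis (Fin d) ℝ E)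
    (P : Fin d → Prop) {u : E}
    (hu : u ∈ Submodule.span ℝ (Set.range fun j : {j : Fin d // P j} => f j.1))
    {i : Fin d} (hi : ¬ P i) : ⟪f i, u⟫ = 0 := by
  induction hu using Submodule.span_induction with
  | mem x hx =>
    obtain ⟨j, rfl⟩ := hx
    apply f.orthonormal.2
    intro h
    exact hi (h ▸ j.2)
  | zero => exact inner_zero_right _
  | add x y hx hy ihx ihy => rw [inner_add_right, ihx, ihy, add_zero]
  | smul a x hx ihx => rw [real_inner_smul_right, ihx, mul_zero]

lemma span_orthonormal_finrank {d : ℕ} (f : OrthonormalBasis (Fin d) ℝ E)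
    (P : Fin d → Prop) [DecidablePred P] :
    Module.finrank ℝ (Submodule.span ℝ (Set.range fun j : {j : Fin d // P j} => f j.1))
      = Fintype.card {j : Fin d // P j} :=
  finrank_span_eq_card ((f.orthonormal.comp _ Subtype.val_injective).linearIndependent)


lemma card_ge_subtype (d a : ℕ) (ha : a < d) :
    Fintype.card {j : Fin d // a ≤ j.1} = d - a := by
  have eqv : {j : Fin d // a ≤ j.1} ≃ Fin (d - a) := {
    toFun := fun j => ⟨j.1.1 - a, by have := j.1.isLt; have := j.2; omega⟩
    invFun := fun i => ⟨⟨i.1 + a, by have := i.isLt; omega⟩, by simp⟩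
    left_inv := fun j => by
      apply Subtype.ext; apply Fin.ext; have := j.2; simp; omega
    right_inv := fun i => by
      apply Fin.ext; simp }
  rw [Fintype.card_congr eqv, Fintype.card_fin]

lemma card_lt_subtype (d a : ℕ) (ha : a ≤ d) :
    Fintype.card {j : Fin d // j.1 < a} = a := by
  have eqv : {j : Fin d // j.1 < a} ≃ Fin a := {
    toFun := fun j => ⟨j.1.1, j.2⟩
    invFun := fun i => ⟨⟨i.1, by have := i.isLt; omega⟩, i.isLt⟩
    left_inv := fun j => by apply Subtype.ext; apply Fin.ext; simp
    right_inv := fun i => by apply Fin.ext; simp }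
  rw [Fintype.card_congr eqv, Fintype.card_fin]

lemma sv_eq (M : E →ₗ[ℝ] F) (d : ℕ) (hd : Module.finrank ℝ E = d)
    (f : OrthonormalBasis (Fin d) ℝ E) (ν : Fin d → ℝ)
    (hmono : Antitone ν) (hnon : ∀ j, 0 ≤ ν j)
    (heig : ∀ j, (LinearMap.adjoint M) (M (f j)) = ν j • f j)
    (k : ℕ) (hk1 : 1 ≤ k) (hkd : k ≤ d) :
    singularValue M k = Real.sqrt (ν ⟨k - 1, by omega⟩) := by
  classical
  set k' : Fin d := ⟨k - 1, by omega⟩ with hk'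
  set s : ℝ := Real.sqrt (ν k') with hs
  have hsnon : 0 ≤ s := Real.sqrt_nonneg _
  have hssq : s ^ 2 = ν k' := Real.sq_sqrt (hnon k')
  set R : Submodule ℝ E → Set ℝ := fun S => {r : ℝ | ∃ u ∈ S, u ≠ 0 ∧ r = ‖M u‖ / ‖u‖} with hR
  -- boundedness
  have hbdd : ∀ S, BddAbove (R S) := by
    intro S
    refine ⟨‖LinearMap.toContinuousLinearMap M‖, ?_⟩
    rintro r ⟨u, _, hu0, rfl⟩
    rw [div_le_iff₀ (norm_pos_iff.mpr hu0)]
    have := (LinearMap.toContinuousLinearMap M).le_opNorm u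
    simpa using this
  have hR0 : ∀ S, ∀ r ∈ R S, 0 ≤ r := by
    rintro S r ⟨u, _, hu0, rfl⟩
    positivity
  -- the two special subspaces
  set S₀ : Submodule ℝ E :=
    Submodule.span ℝ (Set.range fun j : {j : Fin d // k - 1 ≤ j.1} => f j.1) with hS₀
  set U : Submodule ℝ E :=
    Submodule.span ℝ (Set.range fun j : {j : Fin d // j.1 < k} => f j.1) with hU
  have hrankS₀ : Module.finrank ℝ S₀ = d - k + 1 := by
    rw [hS₀, span_orthonormal_finrank, card_ge_subtype d (k-1) (by omega)]
    omega
  have hrankU : Module.finrank ℝ U = k := by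
    rw [hU, span_orthonormal_finrank, card_lt_subtype d k hkd]
  -- Rayleigh quotient bounds
  have hup : ∀ u ∈ S₀, ‖M u‖ ^ 2 ≤ ν k' * ‖u‖ ^ 2 := by
    intro u hu
    rw [normM_sq M f ν heig, norm_sq_sum f, Finset.mul_sum]
    apply Finset.sum_le_sum
    intro j _
    by_cases hj : k - 1 ≤ j.1
    · exact mul_le_mul_of_nonneg_right (hmono (show k' ≤ j from hj)) (sq_nonneg _)
    · rw [coeff_zero_of_mem_span f _ hu hj]
      simp
  have hlow : ∀ u ∈ U, ν k' * ‖u‖ ^ 2 ≤ ‖M u‖ ^ 2 := by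
    intro u hu
    rw [normM_sq M f ν heig, norm_sq_sum f, Finset.mul_sum]
    apply Finset.sum_le_sum
    intro j _
    by_cases hj : j.1 < k
    · refine mul_le_mul_of_nonneg_right (hmono ?_) (sq_nonneg _)
      show j.1 ≤ k - 1
      omega
    · rw [coeff_zero_of_mem_span f _ hu hj]
      simp
  have hup' : ∀ u ∈ S₀, u ≠ 0 → ‖M u‖ / ‖u‖ ≤ s := by
    intro u hu hu0
    have hpos : 0 < ‖u‖ := norm_pos_iff.mpr hu0
    rw [div_le_iff₀ hpos]
    have h1 : ‖M u‖ = Real.sqrt (‖M u‖ ^ 2) := (Real.sqrt_sq (norm_nonneg _)).symm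
    rw [h1]
    have h2 : s * ‖u‖ = Real.sqrt (ν k' * ‖u‖ ^ 2) := by
      rw [Real.sqrt_mul (hnon k'), Real.sqrt_sq (norm_nonneg _)]
    rw [h2]
    exact Real.sqrt_le_sqrt (hup u hu)
  have hlow' : ∀ u ∈ U, u ≠ 0 → s ≤ ‖M u‖ / ‖u‖ := by
    intro u hu hu0
    have hpos : 0 < ‖u‖ := norm_pos_iff.mpr hu0
    rw [le_div_iff₀ hpos]
    have h1 : ‖M u‖ = Real.sqrt (‖M u‖ ^ 2) := (Real.sqrt_sq (norm_nonneg _)).symm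
    have h2 : s * ‖u‖ = Real.sqrt (ν k' * ‖u‖ ^ 2) := by
      rw [Real.sqrt_mul (hnon k'), Real.sqrt_sq (norm_nonneg _)]
    rw [h1, h2]
    exact Real.sqrt_le_sqrt (hlow u hu)
  -- the witness vector
  have hwS₀ : f k' ∈ S₀ :=
    Submodule.subset_span ⟨⟨k', le_refl _⟩, rfl⟩
  have hwU : f k' ∈ U :=
    Submodule.subset_span ⟨⟨k', Nat.sub_lt (by omega) (by omega)⟩, rfl⟩
  have hwnorm : ‖f k'‖ = 1 := f.orthonormal.1 k'
  have hw0 : f k' ≠ 0 := by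
    intro h
    rw [h, norm_zero] at hwnorm
    norm_num at hwnorm
  have hwratio : ‖M (f k')‖ / ‖f k'‖ = s :=
    le_antisymm (hup' _ hwS₀ hw0) (hlow' _ hwU hw0)
  have hsmem : s ∈ R S₀ := ⟨f k', hwS₀, hw0, hwratio.symm⟩
  have hSup : sSup (R S₀) = s := by
    apply le_antisymm
    · apply csSup_le ⟨s, hsmem⟩
      rintro r ⟨u, hu, hu0, rfl⟩
      exact hup' u hu hu0
    · exact le_csSup (hbdd S₀) hsmem
  -- nonemptiness of subspaces of the correct rank
  have hne : ∀ S : Submodule ℝ E, Module.finrank ℝ S = d - k + 1 → ∃ u ∈ S, u ≠ 0 := by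
    intro S hS
    apply Submodule.exists_mem_ne_zero_of_ne_bot
    intro h
    rw [h, finrank_bot] at hS
    omega
  set SetT : Set ℝ := {t : ℝ | ∃ S : Submodule ℝ E,
      Module.finrank ℝ S = Module.finrank ℝ E - k + 1 ∧ t = sSup (R S)} with hSetT
  have hT0mem : s ∈ SetT := ⟨S₀, by rw [hd]; exact hrankS₀, hSup.symm⟩
  have hlowT : ∀ t ∈ SetT, s ≤ t := by
    rintro t ⟨S, hS, rfl⟩
    rw [hd] at hS
    have hdim := Submodule.finrank_sup_add_finrank_inf_eq S U
    have hle : Module.finrank ℝ ↥(S ⊔ U) ≤ d := hd ▸ Submodule.finrank_le _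
    have hinf : 1 ≤ Module.finrank ℝ ↥(S ⊓ U) := by omega
    have hnb : S ⊓ U ≠ ⊥ := by
      intro h
      rw [h, finrank_bot] at hinf
      omega
    obtain ⟨u, hu, hu0⟩ := Submodule.exists_mem_ne_zero_of_ne_bot hnb
    have hrmem : ‖M u‖ / ‖u‖ ∈ R S := ⟨u, hu.1, hu0, rfl⟩
    calc s ≤ ‖M u‖ / ‖u‖ := hlow' u hu.2 hu0
    _ ≤ sSup (R S) := le_csSup (hbdd S) hrmem
  have hbddbelow : BddBelow SetT := by
    refine ⟨0, ?_⟩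
    rintro t ⟨S, hS, rfl⟩
    rw [hd] at hS
    obtain ⟨u, hu, hu0⟩ := hne S hS
    have hrmem : ‖M u‖ / ‖u‖ ∈ R S := ⟨u, hu, hu0, rfl⟩
    calc (0:ℝ) ≤ ‖M u‖ / ‖u‖ := hR0 S _ hrmem
    _ ≤ sSup (R S) := le_csSup (hbdd S) hrmem
  rw [singularValue, if_pos (by omega : k ≤ Module.finrank ℝ E)]
  exact le_antisymm (csInf_le hbddbelow hT0mem) (le_csInf ⟨s, hT0mem⟩ hlowT)

lemma sv_nonzero_set (M : E →ₗ[ℝ] F) :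
    {r : ℝ | r ≠ 0 ∧ ∃ k : ℕ, 1 ≤ k ∧ singularValue M k = r} =
    {r : ℝ | 0 < r ∧ ∃ v : E, v ≠ 0 ∧ (LinearMap.adjoint M) (M v) = (r ^ 2) • v} := by
  obtain ⟨f, ν, hmono, hnon, heig⟩ := exists_sorted_eigenbasis M (Module.finrank ℝ E) rfl
  ext r
  simp only [Set.mem_setOf_eq]
  constructor
  · rintro ⟨hr0, k, hk1, hsv⟩
    have hkd : k ≤ Module.finrank ℝ E := by
      by_contra h
      rw [singularValue, if_neg h] at hsv
      exact hr0 hsv.symm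
    rw [sv_eq M _ rfl f ν hmono hnon heig k hk1 hkd] at hsv
    set k' : Fin (Module.finrank ℝ E) := ⟨k - 1, by omega⟩ with hk'
    have hνpos : 0 < ν k' := by
      rcases lt_or_eq_of_le (hnon k') with h | h
      · exact h
      · exfalso; apply hr0; rw [← hsv, ← h, Real.sqrt_zero]
    refine ⟨by rw [← hsv]; exact Real.sqrt_pos.mpr hνpos, f k', ?_, ?_⟩
    · intro h
      have := f.orthonormal.1 k'
      rw [h, norm_zero] at this
      norm_num at this
    · rw [← hsv, Real.sq_sqrt (hnon k')]
      exact heig k'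
  · rintro ⟨hrpos, v, hv0, hveig⟩
    have key : ∀ j, (ν j - r ^ 2) * ⟪f j, v⟫ = 0 := by
      intro j
      have h1 : ⟪f j, (LinearMap.adjoint M) (M v)⟫ = r ^ 2 * ⟪f j, v⟫ := by
        rw [hveig, real_inner_smul_right]
      have h2 : ⟪f j, (LinearMap.adjoint M) (M v)⟫ = ν j * ⟪f j, v⟫ := by
        rw [LinearMap.adjoint_inner_right, ← LinearMap.adjoint_inner_left, heig,
          real_inner_smul_left]
      rw [sub_mul, ← h1, ← h2, sub_self]
    have hex : ∃ j, ⟪f j, v⟫ ≠ 0 := by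
      by_contra h
      push_neg at h
      apply hv0
      rw [← f.sum_repr' v]
      apply Finset.sum_eq_zero
      intro j _
      rw [h j, zero_smul]
    obtain ⟨j, hj⟩ := hex
    have hνj : ν j = r ^ 2 := by
      rcases mul_eq_zero.mp (key j) with h | h
      · linarith [sub_eq_zero.mp h]
      · exact absurd h hj
    refine ⟨hrpos.ne', j.1 + 1, by omega, ?_⟩
    rw [sv_eq M _ rfl f ν hmono hnon heig (j.1 + 1) (by omega) (by omega)]
    have hjj : (⟨j.1 + 1 - 1, by omega⟩ : Fin (Module.finrank ℝ E)) = j := by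
      apply Fin.ext; simp
    rw [hjj, hνj, Real.sqrt_sq hrpos.le]

lemma transport_subset (M : E →ₗ[ℝ] F) (M' : F →ₗ[ℝ] E)
    (h : ∀ x y, ⟪M x, y⟫ = -⟪x, M' y⟫) :
    {r : ℝ | 0 < r ∧ ∃ v : E, v ≠ 0 ∧ (LinearMap.adjoint M) (M v) = (r ^ 2) • v} ⊆
    {r : ℝ | 0 < r ∧ ∃ w : F, w ≠ 0 ∧ (LinearMap.adjoint M') (M' w) = (r ^ 2) • w} := by
  have hadj : LinearMap.adjoint M = -M' := by
    symm
    rw [LinearMap.eq_adjoint_iff]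
    intro y x
    rw [LinearMap.neg_apply, inner_neg_left]
    linarith [h x y, real_inner_comm (M' y) x, real_inner_comm y (M x)]
  have hM' : M' = -(LinearMap.adjoint M) := by rw [hadj, neg_neg]
  have hadj' : LinearMap.adjoint M' = -M := by
    have h2 := congrArg LinearMap.adjoint hadj
    rw [LinearMap.adjoint_adjoint, map_neg] at h2
    exact (neg_eq_iff_eq_neg.mpr h2).symm
  rintro r ⟨hr, v, hv0, hv⟩
  refine ⟨hr, M v, ?_, ?_⟩
  · intro hMv
    apply hv0
    have h0 : (LinearMap.adjoint M) (M v) = 0 := by rw [hMv, map_zero]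
    rw [hv] at h0
    rcases smul_eq_zero.mp h0 with h' | h'
    · exact absurd h' (by positivity)
    · exact h'
  · rw [hadj', hM']
    simp only [LinearMap.neg_apply, map_neg, neg_neg]
    rw [hv, map_smul]

lemma transport_eq (M : E →ₗ[ℝ] F) (M' : F →ₗ[ℝ] E)
    (h : ∀ x y, ⟪M x, y⟫ = -⟪x, M' y⟫) :
    {r : ℝ | 0 < r ∧ ∃ v : E, v ≠ 0 ∧ (LinearMap.adjoint M) (M v) = (r ^ 2) • v} =
    {r : ℝ | 0 < r ∧ ∃ w : F, w ≠ 0 ∧ (LinearMap.adjoint M') (M' w) = (r ^ 2) • w} := by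
  apply Set.Subset.antisymm (transport_subset M M' h)
  apply transport_subset M' M
  intro y x
  linarith [h x y, real_inner_comm (M' y) x, real_inner_comm y (M x)]

end CF

theorem statement7 (n : ℕ) (I J : Finset (Fin n))
    (hIJ : I ∪ J = Finset.univ) (hdisj : Disjoint I J)
    (W : Submodule ℝ (EuclideanSpace ℝ (Fin n)))
    (L : EuclideanSpace ℝ {i : Fin n // i ∈ I} →ₗ[ℝ] EuclideanSpace ℝ (Fin n))
    (L' : EuclideanSpace ℝ {j : Fin n // j ∈ J} →ₗ[ℝ] EuclideanSpace ℝ (Fin n))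
    (hL : IsLiftingMap I W L) (hL' : IsLiftingMap J Wᗮ L') :
    (∀ x y, ⟪(coordRestrict J).comp L x, y⟫ = -⟪x, (coordRestrict I).comp L' y⟫) ∧
    {r : ℝ | r ≠ 0 ∧ ∃ k : ℕ, 1 ≤ k ∧ singularValue ((coordRestrict J).comp L) k = r} =
      {r : ℝ | r ≠ 0 ∧ ∃ k : ℕ, 1 ≤ k ∧ singularValue ((coordRestrict I).comp L') k = r} := by
  have part1 := adjoint_identity I J hIJ hdisj W L L' hL hL'
  refine ⟨part1, ?_⟩
  rw [sv_nonzero_set, sv_nonzero_set]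
  exact transport_eq _ _ part1
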